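/- Let X be a standard Borel space equipped with a measurable pq-metric c, let k ≥ 1 be an integer, let p, q, r be probability measures on X, let s be a coupling of p and q, and let t be a coupling of q and r. Then cost_k(t∘s) ≤ cost_k(s) + cost_k(t), where the inequality is between values in [0,∞]. -/

import Mathlib

open MeasureTheory ProbabilityTheory ENNReal

variable {X : Type*} [MeasurableSpace X] [StandardBorelSpace X] [Nonempty X]

/-- The composite `t ∘ s` of couplings: push `q ⊗ (s⃖ ×ₖ t⃗)` onto the outer two coordinates,
where `q = s.snd` is the middle measure. -/
noncomputable def coupComp (t s : Measure (X × X)) [IsFiniteMeasure s] [IsFiniteMeasure t] :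
    Measure (X × X) :=
  (s.snd.compProd ((s.map Prod.swap).condKernel ×ₖ t.condKernel)).map Prod.snd

/-- The `k`-cost of a measure `s` on `X × X`, relative to a cost function `c`:
`cost_k(s) = (∫ c(x,y)^k ds(x,y))^(1/k)`, computed in `[0,∞]`. -/
noncomputable def cost (c : X × X → ℝ≥0∞) (k : ℕ) (s : Measure (X × X)) : ℝ≥0∞ :=
  (∫⁻ z, c z ^ k ∂s) ^ ((k : ℝ)⁻¹)

/-- Triangle inequality for the `k`-cost of composite couplings: if `c` is a measurable
pq-metric on the standard Borel space `X`, then `cost_k(t ∘ s) ≤ cost_k(s) + cost_k(t)`. -/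
theorem cost_coupComp_le (c : X × X → ℝ≥0∞) (hc : Measurable c)
    (hrefl : ∀ x : X, c (x, x) = 0)
    (htri : ∀ x y z : X, c (x, z) ≤ c (x, y) + c (y, z))
    (k : ℕ) (hk : 1 ≤ k)
    (p q r : Measure X)
    [IsProbabilityMeasure p] [IsProbabilityMeasure q] [IsProbabilityMeasure r]
    (s t : Measure (X × X)) [IsProbabilityMeasure s] [IsProbabilityMeasure t]
    (hs1 : s.fst = p) (hs2 : s.snd = q) (ht1 : t.fst = q) (ht2 : t.snd = r) :
    cost c k (coupComp t s) ≤ cost c k s + cost c k t := by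
  classical
  have hswap : Measurable (Prod.swap : X × X → X × X) := measurable_swap
  have hprob : IsProbabilityMeasure (s.map Prod.swap) :=
    Measure.isProbabilityMeasure_map hswap.aemeasurable
  set κ₁ := (s.map Prod.swap).condKernel with hκ₁
  set κ₂ := t.condKernel with hκ₂
  set μ := s.snd.compProd (κ₁ ×ₖ κ₂) with hμ
  set f : X × (X × X) → ℝ≥0∞ := fun w => c (w.2.1, w.1) with hf
  set g : X × (X × X) → ℝ≥0∞ := fun w => c (w.1, w.2.2) with hg
  have hfm : Measurable f := hc.comp (by fun_prop)
  have hgm : Measurable g := hc.comp (by fun_prop)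
  have h1 : cost c k (coupComp t s) = (∫⁻ w, c w.2 ^ k ∂μ) ^ ((k : ℝ)⁻¹) := by
    rw [cost, coupComp, lintegral_map (by fun_prop) measurable_snd]
  have hfs : ∫⁻ w, f w ^ k ∂μ = ∫⁻ z, c z ^ k ∂s := by
    rw [hμ, Measure.lintegral_compProd (by fun_prop)]
    have hin : ∀ y, (∫⁻ p, f (y, p) ^ k ∂(κ₁ ×ₖ κ₂) y) = ∫⁻ x, c (x, y) ^ k ∂κ₁ y := by
      intro y
      rw [Kernel.lintegral_prod _ _ _ (by fun_prop)]
      simp [hf]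
    simp_rw [hin]
    rw [show s.snd = (s.map Prod.swap).fst from (Measure.fst_map_swap).symm,
      ← Measure.lintegral_compProd (f := fun w : X × X => c (w.2, w.1) ^ k) (by fun_prop),
      Measure.disintegrate, lintegral_map (by fun_prop) hswap]
    simp
  have hgs : ∫⁻ w, g w ^ k ∂μ = ∫⁻ z, c z ^ k ∂t := by
    rw [hμ, Measure.lintegral_compProd (by fun_prop)]
    have hin : ∀ y, (∫⁻ p, g (y, p) ^ k ∂(κ₁ ×ₖ κ₂) y) = ∫⁻ z, c (y, z) ^ k ∂κ₂ y := by
      intro y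
      rw [Kernel.lintegral_prod _ _ _ (by fun_prop)]
      simp [hg]
    simp_rw [hin]
    rw [show s.snd = t.fst from hs2.trans ht1.symm,
      ← Measure.lintegral_compProd (f := fun w : X × X => c (w.1, w.2) ^ k) (by fun_prop),
      Measure.disintegrate]
  have hk1 : (1 : ℝ) ≤ (k : ℝ) := by exact_mod_cast hk
  calc cost c k (coupComp t s)
      ≤ (∫⁻ w, (f w + g w) ^ k ∂μ) ^ ((k : ℝ)⁻¹) := by
        rw [h1]
        refine ENNReal.rpow_le_rpow (lintegral_mono fun w => ?_) (by positivity)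
        exact pow_le_pow_left' (htri w.2.1 w.1 w.2.2) k
    _ ≤ (∫⁻ w, f w ^ k ∂μ) ^ ((k : ℝ)⁻¹) + (∫⁻ w, g w ^ k ∂μ) ^ ((k : ℝ)⁻¹) := by
        have := ENNReal.lintegral_Lp_add_le (μ := μ) hfm.aemeasurable hgm.aemeasurable hk1
        simpa [one_div, ENNReal.rpow_natCast] using this
    _ = cost c k s + cost c k t := by rw [hfs, hgs, cost, cost]
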